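/- The number of k-structures S = (A,B) with prescribed block sizes |A_i| = a_i and |B_i| = b_i for i = 1,...,l equals ∏_{i=2}^l binom(a_{i-1} + b_{i-1}, b_i). -/

import Mathlib

open scoped Classical
set_option linter.unusedSectionVars false
set_option maxHeartbeats 1000000

/-- `IsKStructure A B` : the pair `S = (A, B)` is a `k`-structure with `l` blocks.
`A` is an ordered partition of `{1,…,k}` into nonempty consecutive intervals,
`B₁ = ∅`, `B_i ⊆ A_1 ∪ ⋯ ∪ A_{i-1}`, and `B` is monotonic. -/
def IsKStructure {k l : ℕ} (A B : Fin l → Finset (Fin k)) : Prop :=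
  (∀ i, (A i).Nonempty) ∧
  (∀ x : Fin k, ∃! i, x ∈ A i) ∧
  (∀ i j : Fin l, i < j → ∀ x ∈ A i, ∀ y ∈ A j, x < y) ∧
  (∀ i : Fin l, i.val = 0 → B i = ∅) ∧
  (∀ i : Fin l, ∀ x ∈ B i, ∃ j < i, x ∈ A j) ∧
  (∀ x : Fin k, ∀ i j j' : Fin l, x ∈ B j → x ∈ A i → i < j' → j' ≤ j → x ∈ B j')

/-- Extend a family of sets indexed by `Fin l` to all of `ℕ` by the empty set. -/
def extFam {k l : ℕ} (A : Fin l → Finset (Fin k)) (j : ℕ) : Finset (Fin k) :=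
  if h : j < l then A ⟨j, h⟩ else ∅

/-- The index of the block of the partition `A` containing `x`. -/
noncomputable def blockOf {k l : ℕ} (A : Fin l → Finset (Fin k)) (x : Fin k) : ℕ :=
  sInf {i : ℕ | x ∈ extFam A i}

/-- `A_x ∪ B_x` where `A_x` is the block containing `i`. -/
noncomputable def blockUnion {k l : ℕ} (A B : Fin l → Finset (Fin k)) (i : Fin k) :
    Finset (Fin k) :=
  extFam A (blockOf A i) ∪ extFam B (blockOf A i)

/-- `m(S,i)` : the number of `j ∈ A_x ∪ B_x` with `j < i`, where `i ∈ A_x`. -/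
noncomputable def mS {k l : ℕ} (A B : Fin l → Finset (Fin k)) (i : Fin k) : ℕ :=
  ((blockUnion A B i).filter (fun j => j < i)).card

/-- `def₁(S,v,i)` : the number of `j ∈ A_x ∪ B_x` with `j < i` and `v j < v i`. -/
noncomputable def def1 {k l n : ℕ} (A B : Fin l → Finset (Fin k))
    (v : Fin k → Fin n) (i : Fin k) : ℕ :=
  ((blockUnion A B i).filter (fun j => j < i ∧ v j < v i)).card

/-- membership in `V(S,n)` : `v` takes distinct values on each set `A_m ∪ B_m`. -/
def memV {k l n : ℕ} (A B : Fin l → Finset (Fin k)) (v : Fin k → Fin n) : Prop :=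
  ∀ m : Fin l, ∀ i ∈ A m ∪ B m, ∀ j ∈ A m ∪ B m, i ≠ j → v i ≠ v j

/-- The quantum integer `(m)_t = 1 + t + ⋯ + t^{m-1}`. -/
def qint {R : Type*} [CommSemiring R] (t : R) (m : ℕ) : R :=
  ∑ j ∈ Finset.range m, t ^ j

section Chain

variable {α : Type*} [Fintype α] [DecidableEq α]

def ChainPred (C : ℕ → Finset α) (b : ℕ → ℕ) (m : ℕ) (B : Fin m → Finset α) : Prop :=
  (∀ i : Fin m, i.val = 0 → B i = ∅) ∧
  (∀ i : ℕ, ∀ h : i + 1 < m, B ⟨i + 1, h⟩ ⊆ C i ∪ B ⟨i, Nat.lt_of_succ_lt h⟩) ∧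
  (∀ i : Fin m, (B i).card = b i.val)

lemma chain_subset_biUnion {C : ℕ → Finset α} {b : ℕ → ℕ} {m : ℕ} {B : Fin m → Finset α}
    (hB : ChainPred C b m B) : ∀ i : Fin m, B i ⊆ (Finset.range i.val).biUnion C := by
  obtain ⟨h0, hch, _⟩ := hB
  intro i
  obtain ⟨v, hv⟩ := i
  induction v with
  | zero => simp [h0 ⟨0, hv⟩ rfl]
  | succ t ih =>
    intro x hx
    rcases Finset.mem_union.mp (hch t hv hx) with h | h
    · exact Finset.mem_biUnion.mpr ⟨t, Finset.self_mem_range_succ t, h⟩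
    · have hsub := ih (Nat.lt_of_succ_lt hv) h
      have : (Finset.range t).biUnion C ⊆ (Finset.range (t + 1)).biUnion C :=
        Finset.biUnion_subset_biUnion_of_subset_left C
          (Finset.range_subset_range.mpr (Nat.le_succ t))
      exact this hsub

lemma chain_disjoint {C : ℕ → Finset α} {b : ℕ → ℕ} {m : ℕ} {B : Fin m → Finset α}
    (hB : ChainPred C b m B)
    (hdisj : ∀ i j : ℕ, i ≠ j → Disjoint (C i) (C j)) (i : Fin m) :
    Disjoint (C i.val) (B i) := by
  refine Finset.disjoint_right.mpr fun x hxB hxC => ?_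
  obtain ⟨j, hj, hxj⟩ := Finset.mem_biUnion.mp (chain_subset_biUnion hB i hxB)
  have hne : i.val ≠ j := Nat.ne_of_gt (Finset.mem_range.mp hj)
  exact Finset.disjoint_left.mp (hdisj i.val j hne) hxC hxj

lemma chain_count (C : ℕ → Finset α) (a b : ℕ → ℕ)
    (hdisj : ∀ i j : ℕ, i ≠ j → Disjoint (C i) (C j))
    (hb0 : b 0 = 0) (m : ℕ) :
    (∀ i : ℕ, i + 1 < m → (C i).card = a i) →
    Nat.card {B : Fin m → Finset α // ChainPred C b m B} =
      ∏ i ∈ Finset.range (m - 1), (a i + b i).choose (b (i + 1)) := by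
  induction m with
  | zero =>
    intro _
    simp only [Nat.zero_sub, Finset.range_zero, Finset.prod_empty]
    rw [Nat.card_eq_one_iff_unique]
    constructor
    · constructor
      intro B B'
      apply Subtype.ext; funext i; exact i.elim0
    · refine ⟨⟨fun i => i.elim0, ?_, ?_, ?_⟩⟩
      · intro i; exact i.elim0
      · intro i h; omega
      · intro i; exact i.elim0
  | succ n ih =>
    intro hcard
    match n, ih with
    | 0, _ =>
      simp only [Nat.sub_self, Finset.range_zero, Finset.prod_empty]
      rw [Nat.card_eq_one_iff_unique]
      constructor
      · constructor
        intro B B'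
        apply Subtype.ext; funext i
        have h0 : i.val = 0 := by omega
        rw [B.2.1 i h0, B'.2.1 i h0]
      · refine ⟨⟨fun _ => ∅, fun _ _ => rfl, fun i h => by omega, fun i => ?_⟩⟩
        have : i.val = 0 := by omega
        rw [this, hb0, Finset.card_empty]
    | n + 1, ih =>
      have key : Nat.card {B : Fin (n + 2) → Finset α // ChainPred C b (n + 2) B} =
          Nat.card {B : Fin (n + 1) → Finset α // ChainPred C b (n + 1) B} *
            (a n + b n).choose (b (n + 1)) := by
        rw [Nat.card_eq_fintype_card, Nat.card_eq_fintype_card,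
          Fintype.card_subtype, Fintype.card_subtype]
        have hmapsto : ∀ B ∈ Finset.univ.filter (ChainPred C b (n + 2)),
            Fin.init B ∈ Finset.univ.filter (ChainPred C b (n + 1)) := by
          intro B hBmem
          have hB : ChainPred C b (n + 2) B := (Finset.mem_filter.mp hBmem).2
          refine Finset.mem_filter.mpr ⟨Finset.mem_univ _, ?_, ?_, ?_⟩
          · intro i hi
            exact hB.1 (Fin.castSucc i) hi
          · intro i h
            exact hB.2.1 i (by omega)
          · intro i
            exact hB.2.2 (Fin.castSucc i)
        rw [Finset.card_eq_sum_card_fiberwise hmapsto]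
        have hfiber : ∀ B' ∈ Finset.univ.filter (ChainPred C b (n + 1)),
            ((Finset.univ.filter (ChainPred C b (n + 2))).filter
              (fun B => Fin.init B = B')).card = (a n + b n).choose (b (n + 1)) := by
          intro B' hB'mem
          have hB' : ChainPred C b (n + 1) B' := (Finset.mem_filter.mp hB'mem).2
          have hp : n < n + 1 := Nat.lt_succ_self n
          have hUcard : (C n ∪ B' ⟨n, hp⟩).card = a n + b n := by
            rw [Finset.card_union_of_disjoint (chain_disjoint hB' hdisj ⟨n, hp⟩),
              hcard n (by omega), hB'.2.2 ⟨n, hp⟩]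
          rw [← hUcard, ← Finset.card_powersetCard]
          refine Finset.card_bij' (fun B _ => B (Fin.last (n + 1)))
            (fun s _ => Fin.snoc B' s) ?_ ?_ ?_ ?_
          · intro B hBmem
            rw [Finset.mem_filter] at hBmem
            obtain ⟨hBmem, hinit⟩ := hBmem
            have hB : ChainPred C b (n + 2) B := (Finset.mem_filter.mp hBmem).2
            refine Finset.mem_powersetCard.mpr ⟨?_, ?_⟩
            · have hsub := hB.2.1 n (by omega)
              have h1 : B ⟨n, by omega⟩ = B' ⟨n, hp⟩ := by
                rw [← hinit]; rfl
              have h2 : B (Fin.last (n + 1)) = B ⟨n + 1, by omega⟩ := rfl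
              rw [h2, ← h1]
              exact hsub
            · exact hB.2.2 (Fin.last (n + 1))
          · intro s hsmem
            obtain ⟨hssub, hscard⟩ := Finset.mem_powersetCard.mp hsmem
            refine Finset.mem_filter.mpr ⟨Finset.mem_filter.mpr ⟨Finset.mem_univ _,
              ?_, ?_, ?_⟩, by simp⟩
            · intro i hi
              have hlt : i.val < n + 1 := by omega
              have : i = Fin.castSucc ⟨i.val, hlt⟩ := Fin.ext rfl
              rw [this, Fin.snoc_castSucc]
              exact hB'.1 ⟨i.val, hlt⟩ hi
            · intro i h
              rcases Nat.lt_or_ge (i + 1) (n + 1) with h1 | h1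
              · have e1 : (⟨i + 1, h⟩ : Fin (n + 2)) = Fin.castSucc ⟨i + 1, h1⟩ := Fin.ext rfl
                have e2 : (⟨i, Nat.lt_of_succ_lt h⟩ : Fin (n + 2)) =
                  Fin.castSucc ⟨i, by omega⟩ := Fin.ext rfl
                rw [e1, e2, Fin.snoc_castSucc, Fin.snoc_castSucc]
                exact hB'.2.1 i h1
              · have hie : i = n := by omega
                subst hie
                have e1 : (⟨i + 1, h⟩ : Fin (i + 2)) = Fin.last (i + 1) := Fin.ext rfl
                have e2 : (⟨i, Nat.lt_of_succ_lt h⟩ : Fin (i + 2)) =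
                  Fin.castSucc ⟨i, hp⟩ := Fin.ext rfl
                rw [e1, e2, Fin.snoc_castSucc, Fin.snoc_last]
                exact hssub
            · intro i
              rcases Nat.lt_or_ge i.val (n + 1) with h1 | h1
              · have : i = Fin.castSucc ⟨i.val, h1⟩ := Fin.ext rfl
                rw [this, Fin.snoc_castSucc]
                exact hB'.2.2 ⟨i.val, h1⟩
              · have : i = Fin.last (n + 1) := Fin.ext (by rw [Fin.val_last]; omega)
                rw [this, Fin.snoc_last]
                rw [hscard]
                rfl
          · intro B hBmem
            rw [Finset.mem_filter] at hBmem
            obtain ⟨_, hinit⟩ := hBmem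
            rw [← hinit]
            exact Fin.snoc_init_self B
          · intro s _
            simp
        rw [Finset.sum_congr rfl hfiber, Finset.sum_const, smul_eq_mul]
      rw [key, ih (fun i hi => hcard i (Nat.lt_succ_of_lt hi))]
      have : n + 2 - 1 = n + 1 := rfl
      rw [this, Finset.prod_range_succ]
      simp

end Chain

def off (a : ℕ → ℕ) (i : ℕ) : ℕ := ∑ j ∈ Finset.range i, a j

lemma off_mono (a : ℕ → ℕ) {i j : ℕ} (h : i ≤ j) : off a i ≤ off a j :=
  Finset.sum_le_sum_of_subset (Finset.range_subset_range.mpr h)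

lemma off_succ (a : ℕ → ℕ) (i : ℕ) : off a (i + 1) = off a i + a i :=
  Finset.sum_range_succ a i

def Acan (k : ℕ) (a : ℕ → ℕ) (i : ℕ) : Finset (Fin k) :=
  Finset.univ.filter fun x => off a i ≤ x.val ∧ x.val < off a (i + 1)

lemma mem_Acan {k : ℕ} {a : ℕ → ℕ} {i : ℕ} {x : Fin k} :
    x ∈ Acan k a i ↔ off a i ≤ x.val ∧ x.val < off a (i + 1) := by
  simp [Acan]

lemma Acan_disjoint (k : ℕ) (a : ℕ → ℕ) {i j : ℕ} (hij : i ≠ j) :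
    Disjoint (Acan k a i) (Acan k a j) := by
  rcases Nat.lt_or_ge i j with h | h
  · refine Finset.disjoint_left.mpr fun x hxi hxj => ?_
    have h1 := (mem_Acan.mp hxi).2
    have h2 := (mem_Acan.mp hxj).1
    have := off_mono a (show i + 1 ≤ j by omega)
    omega
  · have h' : j < i := by omega
    refine Finset.disjoint_left.mpr fun x hxi hxj => ?_
    have h1 := (mem_Acan.mp hxj).2
    have h2 := (mem_Acan.mp hxi).1
    have := off_mono a (show j + 1 ≤ i by omega)
    omega

lemma Acan_map_val {k : ℕ} {a : ℕ → ℕ} {i : ℕ} (h : off a (i + 1) ≤ k) :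
    (Acan k a i).map Fin.valEmbedding = Finset.Ico (off a i) (off a (i + 1)) := by
  ext m
  simp only [Finset.mem_map, Fin.valEmbedding_apply, Finset.mem_Ico, mem_Acan]
  constructor
  · rintro ⟨x, ⟨h1, h2⟩, rfl⟩; exact ⟨h1, h2⟩
  · rintro ⟨h1, h2⟩
    exact ⟨⟨m, lt_of_lt_of_le h2 h⟩, ⟨h1, h2⟩, rfl⟩

lemma Acan_card {k l : ℕ} {a : ℕ → ℕ} (hk : off a l = k) {i : ℕ} (hi : i < l) :
    (Acan k a i).card = a i := by
  have h : off a (i + 1) ≤ k := hk ▸ off_mono a (show i + 1 ≤ l by omega)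
  have := congrArg Finset.card (Acan_map_val (k := k) (a := a) (i := i) h)
  rw [Finset.card_map, Nat.card_Ico, off_succ] at this
  omega

lemma Acan_cover {k l : ℕ} {a : ℕ → ℕ} (hk : off a l = k) (x : Fin k) :
    ∃ i < l, x ∈ Acan k a i := by
  have hx : x.val < off a l := by rw [hk]; exact x.isLt
  have key : ∀ n, x.val < off a n → ∃ i < n, off a i ≤ x.val ∧ x.val < off a (i + 1) := by
    intro n
    induction n with
    | zero => intro h; simp [off] at h
    | succ t ih =>
      intro h
      rcases Nat.lt_or_ge x.val (off a t) with h1 | h1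
      · obtain ⟨i, hi, h2⟩ := ih h1
        exact ⟨i, Nat.lt_succ_of_lt hi, h2⟩
      · exact ⟨t, Nat.lt_succ_self t, h1, h⟩
  obtain ⟨i, hi, h1, h2⟩ := key l hx
  exact ⟨i, hi, mem_Acan.mpr ⟨h1, h2⟩⟩

lemma A_unique {k l : ℕ} {a : ℕ → ℕ} (hk : off a l = k)
    {A : Fin l → Finset (Fin k)}
    (hmem : ∀ x : Fin k, ∃! i, x ∈ A i)
    (hord : ∀ i j : Fin l, i < j → ∀ x ∈ A i, ∀ y ∈ A j, x < y)
    (hcardA : ∀ i : Fin l, (A i).card = a i.val)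
    (i : Fin l) : A i = Acan k a i.val := by
  have hdisjA : ∀ i j : Fin l, i ≠ j → Disjoint (A i) (A j) := by
    intro i j hij
    refine Finset.disjoint_left.mpr fun x hxi hxj => ?_
    obtain ⟨w, _, hw⟩ := hmem x
    exact hij ((hw i hxi).trans (hw j hxj).symm)
  have hsub : A i ⊆ Acan k a i.val := by
    intro x hx
    -- U = Iio x
    have hU : (Finset.Iio x) =
        ((Finset.univ.filter (fun j : Fin l => j < i)).biUnion A) ∪
          ((A i).filter (fun y => y < x)) := by
      ext y
      simp only [Finset.mem_Iio, Finset.mem_union, Finset.mem_biUnion, Finset.mem_filter,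
        Finset.mem_univ, true_and]
      constructor
      · intro hyx
        obtain ⟨jy, hjy, hwy⟩ := hmem y
        rcases lt_trichotomy jy i with h | h | h
        · exact Or.inl ⟨jy, h, hjy⟩
        · subst h; exact Or.inr ⟨hjy, hyx⟩
        · exact absurd (hord i jy h x hx y hjy) (by simp [hyx.asymm])
      · rintro (⟨j, hji, hyj⟩ | ⟨hyi, hyx⟩)
        · exact hord j i hji y hyj x hx
        · exact hyx
    have hdisjU : Disjoint ((Finset.univ.filter (fun j : Fin l => j < i)).biUnion A)
        ((A i).filter (fun y => y < x)) := by
      refine Finset.disjoint_left.mpr fun y hy1 hy2 => ?_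
      obtain ⟨j, hj, hyj⟩ := Finset.mem_biUnion.mp hy1
      have hji : j < i := (Finset.mem_filter.mp hj).2
      exact Finset.disjoint_left.mp (hdisjA j i hji.ne) hyj (Finset.mem_filter.mp hy2).1
    have hcardB : ((Finset.univ.filter (fun j : Fin l => j < i)).biUnion A).card
        = off a i.val := by
      rw [Finset.card_biUnion (fun j1 h1 j2 h2 h12 => hdisjA j1 j2 h12)]
      rw [Finset.sum_congr rfl (fun j _ => hcardA j)]
      unfold off
      refine Finset.sum_bij' (fun (j : Fin l) (_ : j ∈ Finset.univ.filter (fun j : Fin l => j < i)) => j.val)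
        (fun m hm => (⟨m, lt_trans (Finset.mem_range.mp hm) i.isLt⟩ : Fin l)) ?_ ?_ ?_ ?_ ?_
      · intro j hj
        exact Finset.mem_range.mpr (Finset.mem_filter.mp hj).2
      · intro m hm
        simp only [Finset.mem_filter, Finset.mem_univ, true_and, Fin.lt_def]
        exact Finset.mem_range.mp hm
      · intro j hj
        exact Fin.ext rfl
      · intro m hm
        rfl
      · intro j hj
        rfl
    have hcardsm : ((A i).filter (fun y => y < x)).card < a i.val := by
      have hsub2 : (A i).filter (fun y => y < x) ⊆ (A i).erase x := by
        intro y hy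
        rw [Finset.mem_erase]
        obtain ⟨hy1, hy2⟩ := Finset.mem_filter.mp hy
        exact ⟨hy2.ne, hy1⟩
      have h1 := Finset.card_le_card hsub2
      have h2 := Finset.card_erase_of_mem hx
      have h3 : 0 < (A i).card := Finset.card_pos.mpr ⟨x, hx⟩
      rw [hcardA i] at h2 h3
      omega
    have hxval : x.val = ((Finset.univ.filter (fun j : Fin l => j < i)).biUnion A).card
        + ((A i).filter (fun y => y < x)).card := by
      rw [← Finset.card_union_of_disjoint hdisjU, ← hU, Fin.card_Iio]
    rw [mem_Acan, off_succ]
    omega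
  refine Finset.eq_of_subset_of_card_le hsub ?_
  rw [hcardA i, Acan_card hk i.isLt]

lemma chain_mono {k l : ℕ} {a b : ℕ → ℕ} {B : Fin l → Finset (Fin k)}
    (hB : ChainPred (Acan k a) b l B) :
    ∀ (x : Fin k) (i j j' : Fin l), x ∈ B j → x ∈ Acan k a i.val → i < j' → j' ≤ j →
      x ∈ B j' := by
  suffices h : ∀ (d : ℕ) (j j' i : Fin l) (x : Fin k), j.val = j'.val + d → x ∈ B j →
      x ∈ Acan k a i.val → i < j' → j' ≤ j → x ∈ B j' by
    intro x i j j' h1 h2 h3 h4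
    have hle : j'.val ≤ j.val := h4
    exact h (j.val - j'.val) j j' i x (by omega) h1 h2 h3 h4
  intro d
  induction d with
  | zero =>
    intro j j' i x hd hBj hA _ _
    have : j' = j := Fin.ext (by omega)
    subst this
    exact hBj
  | succ t ih =>
    intro j j' i x hd hBj hA hij' hj'j
    have hm1 : j'.val + t + 1 < l := by have := j.isLt; omega
    have hjeq : j = ⟨j'.val + t + 1, hm1⟩ := Fin.ext (show j.val = j'.val + t + 1 by omega)
    rw [hjeq] at hBj
    rcases Finset.mem_union.mp (hB.2.1 (j'.val + t) hm1 hBj) with hc | hb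
    · have hlt : i.val < j'.val := hij'
      exact absurd hc (Finset.disjoint_left.mp (Acan_disjoint k a (i := i.val) (j := j'.val + t) (by omega)) hA)
    · refine ih ⟨j'.val + t, by omega⟩ j' i x rfl hb hA hij' ?_
      show j'.val ≤ j'.val + t
      omega

/-- The number of `k`-structures `S = (A,B)` with prescribed block sizes `|A_i| = a_i`
and `|B_i| = b_i` (blocks indexed from `0`, so this is
`∏_{i=2}^{l} C(a_{i-1} + b_{i-1}, b_i)` in the `1`-indexed notation of the paper). -/
theorem kstructure_count (k l : ℕ) (a b : ℕ → ℕ)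
    (hk : ∑ i ∈ Finset.range l, a i = k)
    (ha : ∀ i ∈ Finset.range l, 0 < a i)
    (hb0 : 0 < l → b 0 = 0) :
    Nat.card {p : (Fin l → Finset (Fin k)) × (Fin l → Finset (Fin k)) //
        IsKStructure p.1 p.2 ∧
        ∀ i : Fin l, (p.1 i).card = a i.val ∧ (p.2 i).card = b i.val} =
      ∏ i ∈ Finset.range (l - 1), (a i + b i).choose (b (i + 1)) := by
  have hoff : off a l = k := hk
  rcases Nat.eq_zero_or_pos l with hl | hl
  · subst hl
    have hk0 : k = 0 := by simpa [off] using hoff.symm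
    subst hk0
    simp only [Nat.zero_sub, Finset.range_zero, Finset.prod_empty]
    rw [Nat.card_eq_one_iff_unique]
    constructor
    · constructor
      intro p q
      apply Subtype.ext
      apply Prod.ext <;> (funext i; exact i.elim0)
    · refine ⟨⟨(fun i => i.elim0, fun i => i.elim0),
        ⟨fun i => i.elim0, fun x => x.elim0, fun i => i.elim0, fun i => i.elim0,
          fun i => i.elim0, fun x => x.elim0⟩, fun i => i.elim0⟩⟩
  · have ha' : ∀ i : Fin l, 0 < a i.val := fun i => ha i.val (Finset.mem_range.mpr i.isLt)
    have e : {p : (Fin l → Finset (Fin k)) × (Fin l → Finset (Fin k)) //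
        IsKStructure p.1 p.2 ∧
        ∀ i : Fin l, (p.1 i).card = a i.val ∧ (p.2 i).card = b i.val} ≃
        {B : Fin l → Finset (Fin k) // ChainPred (Acan k a) b l B} := by
      refine ⟨fun p => ⟨p.val.2, ?_⟩, fun B => ⟨(fun i => Acan k a i.val, B.val), ?_, ?_⟩,
        ?_, ?_⟩
      · -- forward : structure → chain
        obtain ⟨⟨hne, hm, hord, hB0, hBA, hmono⟩, hcards⟩ := p.2
        have hAeq : ∀ i : Fin l, p.val.1 i = Acan k a i.val :=
          A_unique hoff hm hord (fun i => (hcards i).1)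
        refine ⟨hB0, ?_, fun i => (hcards i).2⟩
        intro i h x hx
        obtain ⟨j, hjlt, hxj⟩ := hBA ⟨i + 1, h⟩ x hx
        have hxA : x ∈ Acan k a j.val := hAeq j ▸ hxj
        have hjlt' : j.val < i + 1 := hjlt
        rcases Nat.lt_or_ge j.val i with hji | hji
        · refine Finset.mem_union_right _ ?_
          refine hmono x j ⟨i + 1, h⟩ ⟨i, Nat.lt_of_succ_lt h⟩ hx hxj ?_ ?_
          · exact hji
          · show i ≤ i + 1; omega
        · have hje : j.val = i := by omega
          refine Finset.mem_union_left _ ?_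
          rw [← hje]
          exact hxA
      · -- backward : chain → structure
        obtain ⟨hB0, hch, hcards⟩ := B.2
        refine ⟨fun i => ?_, fun x => ?_, ?_, hB0, ?_, ?_⟩
        · rw [← Finset.card_pos, Acan_card hoff i.isLt]
          exact ha' i
        · obtain ⟨i, hi, hx⟩ := Acan_cover hoff x
          refine ⟨⟨i, hi⟩, hx, fun j hj => ?_⟩
          by_contra hne
          have hvne : j.val ≠ i := fun h => hne (Fin.ext h)
          exact Finset.disjoint_left.mp (Acan_disjoint k a hvne) hj hx
        · intro i j hij x hx y hy
          have h1 := (mem_Acan.mp hx).2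
          have h2 := (mem_Acan.mp hy).1
          have h3 := off_mono a (show i.val + 1 ≤ j.val from hij)
          exact show x.val < y.val by omega
        · intro i x hx
          obtain ⟨t, ht, hxt⟩ := Finset.mem_biUnion.mp
            (chain_subset_biUnion ⟨hB0, hch, hcards⟩ i hx)
          have ht' : t < i.val := Finset.mem_range.mp ht
          exact ⟨⟨t, lt_trans ht' i.isLt⟩, ht', hxt⟩
        · exact chain_mono ⟨hB0, hch, hcards⟩
      · -- cards
        obtain ⟨hB0, hch, hcards⟩ := B.2
        exact fun i => ⟨Acan_card hoff i.isLt, hcards i⟩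
      · -- left inverse
        intro p
        obtain ⟨⟨hne, hm, hord, hB0, hBA, hmono⟩, hcards⟩ := p.2
        apply Subtype.ext
        apply Prod.ext
        · funext i
          exact (A_unique hoff hm hord (fun i => (hcards i).1) i).symm
        · rfl
      · intro B
        rfl
    rw [Nat.card_congr e]
    exact chain_count (Acan k a) a b (fun i j h => Acan_disjoint k a h) (hb0 hl) l
      (fun i h => Acan_card hoff (by omega))
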